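/- Under the saturation assumption, if the saturated independent set Î is not contained in any independent set of G containing i* or j* (i.e., Î∉𝕀*_+), then the function C_2(δ) = ∑_{I∈𝕀*}T_I − ∑_{I∈𝕀̄*}T̄_I (evaluated at α(δ)) can be written on (0,δ̄] as a quotient P(δ)/Q(δ) of real polynomials with Q(δ)≠0 for all δ∈(0,δ̄] and with constant coefficient P(0) > 0. -/

import Mathlib

open Classical Finset

noncomputable section

def nbr {V : Type} [Fintype V] (G : SimpleGraph V) (S : Finset V) : Finset V :=
  Finset.univ.filter fun j => ∃ i ∈ S, G.Adj i j

def aSum {V : Type} (α : V → ℝ) (S : Finset V) : ℝ := ∑ i ∈ S, α i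

def IsIndep {V : Type} (G : SimpleGraph V) (I : Finset V) : Prop :=
  I.Nonempty ∧ ∀ i ∈ I, ∀ j ∈ I, ¬ G.Adj i j

def indepSets {V : Type} [Fintype V] (G : SimpleGraph V) : Finset (Finset V) :=
  Finset.univ.filter fun I => IsIndep G I

def Ncond {V : Type} [Fintype V] (G : SimpleGraph V) (α : V → ℝ) : Prop :=
  ∀ I ∈ indepSets G, aSum α I < aSum α (nbr G I)

def Tlist {V : Type} [Fintype V] [DecidableEq V] (G : SimpleGraph V) (α : V → ℝ) :
    List V → Finset V → ℝ
  | [], _ => 1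
  | i :: l, P =>
      α i / (aSum α (nbr G (insert i P)) - aSum α (insert i P)) * Tlist G α l (insert i P)

def Erat {V : Type} [Fintype V] [DecidableEq V] (G : SimpleGraph V) (α : V → ℝ) :
    List V → Finset V → ℝ
  | [], _ => 0
  | i :: l, P =>
      aSum α (nbr G (insert i P)) / (aSum α (nbr G (insert i P)) - aSum α (insert i P)) +
        Erat G α l (insert i P)

def TI {V : Type} [Fintype V] [DecidableEq V] (G : SimpleGraph V) (α : V → ℝ) (I : Finset V) : ℝ :=
  ∑ l ∈ I.toList.permutations.toFinset, Tlist G α l ∅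

def EI {V : Type} [Fintype V] [DecidableEq V] (G : SimpleGraph V) (α : V → ℝ) (I : Finset V) : ℝ :=
  ∑ l ∈ I.toList.permutations.toFinset, Erat G α l ∅ * Tlist G α l ∅

def meanQ {V : Type} [Fintype V] [DecidableEq V] (G : SimpleGraph V) (α : V → ℝ) : ℝ :=
  (1 + ∑ I ∈ indepSets G, TI G α I)⁻¹ * ∑ I ∈ indepSets G, EI G α I

def IsWord {V : Type} (G : SimpleGraph V) (w : List V) : Prop :=
  w.Pairwise fun a b => ¬ G.Adj a b

def piHatAux {V : Type} [Fintype V] [DecidableEq V] (G : SimpleGraph V) (α : V → ℝ) :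
    List V → Finset V → ℝ
  | [], _ => 1
  | i :: l, P => α i / aSum α (nbr G (insert i P)) * piHatAux G α l (insert i P)

def piHat {V : Type} [Fintype V] [DecidableEq V] (G : SimpleGraph V) (α : V → ℝ) (w : List V) : ℝ :=
  piHatAux G α w ∅

def addEdge {V : Type} (G : SimpleGraph V) (u v : V) : SimpleGraph V :=
  G ⊔ SimpleGraph.fromEdgeSet {s(u, v)}

end

def RatPosCst (db : ℝ) (F : ℝ → ℝ) : Prop :=
  ∃ P Q : Polynomial ℝ, 0 < P.coeff 0 ∧
    ∀ x : ℝ, 0 < x → x ≤ db → Q.eval x ≠ 0 ∧ F x = P.eval x / Q.eval x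

section rq

/-- Rational representation with denominator positive on the closed interval `[0, db]`. -/
def RQ (db : ℝ) (F : ℝ → ℝ) : Prop :=
  ∃ P Q : Polynomial ℝ, ∀ x : ℝ, 0 ≤ x → x ≤ db → 0 < Q.eval x ∧ F x = P.eval x / Q.eval x

lemma RQ_const (db c : ℝ) : RQ db (fun _ => c) :=
  ⟨Polynomial.C c, 1, fun x _ _ => by simp⟩

lemma RQ_mul {db : ℝ} {F1 F2 : ℝ → ℝ} (h1 : RQ db F1) (h2 : RQ db F2) :
    RQ db (fun x => F1 x * F2 x) := by
  obtain ⟨P1, Q1, h1⟩ := h1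
  obtain ⟨P2, Q2, h2⟩ := h2
  refine ⟨P1 * P2, Q1 * Q2, fun x hx hx' => ?_⟩
  obtain ⟨q1, e1⟩ := h1 x hx hx'
  obtain ⟨q2, e2⟩ := h2 x hx hx'
  refine ⟨by simpa using mul_pos q1 q2, ?_⟩
  simp only [Polynomial.eval_mul, e1, e2, div_mul_div_comm]

lemma RQ_add {db : ℝ} {F1 F2 : ℝ → ℝ} (h1 : RQ db F1) (h2 : RQ db F2) :
    RQ db (fun x => F1 x + F2 x) := by
  obtain ⟨P1, Q1, h1⟩ := h1
  obtain ⟨P2, Q2, h2⟩ := h2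
  refine ⟨P1 * Q2 + P2 * Q1, Q1 * Q2, fun x hx hx' => ?_⟩
  obtain ⟨q1, e1⟩ := h1 x hx hx'
  obtain ⟨q2, e2⟩ := h2 x hx hx'
  refine ⟨by simpa using mul_pos q1 q2, ?_⟩
  simp only [Polynomial.eval_add, Polynomial.eval_mul, e1, e2]
  field_simp

lemma RQ_neg {db : ℝ} {F : ℝ → ℝ} (h : RQ db F) : RQ db (fun x => -F x) := by
  obtain ⟨P, Q, h⟩ := h
  refine ⟨-P, Q, fun x hx hx' => ?_⟩
  obtain ⟨q, e⟩ := h x hx hx'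
  exact ⟨q, by simp [e, neg_div]⟩

lemma RQ_sub {db : ℝ} {F1 F2 : ℝ → ℝ} (h1 : RQ db F1) (h2 : RQ db F2) :
    RQ db (fun x => F1 x - F2 x) := by
  have := RQ_add h1 (RQ_neg h2)
  simpa [sub_eq_add_neg] using this

lemma RQ_sum {db : ℝ} {ι : Type*} (s : Finset ι) (f : ι → ℝ → ℝ)
    (h : ∀ i ∈ s, RQ db (f i)) : RQ db (fun x => ∑ i ∈ s, f i x) := by
  induction s using Finset.induction_on with
  | empty => simpa using RQ_const db 0
  | @insert i s his ih =>
      have := RQ_add (h i (Finset.mem_insert_self i s))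
        (ih fun j hj => h j (Finset.mem_insert_of_mem hj))
      simpa [Finset.sum_insert his] using this

lemma RQ_ratio (db c1 d1 c2 d2 : ℝ) (h : ∀ x : ℝ, 0 ≤ x → x ≤ db → 0 < c2 + d2 * x) :
    RQ db (fun x => (c1 + d1 * x) / (c2 + d2 * x)) := by
  refine ⟨Polynomial.C c1 + Polynomial.C d1 * Polynomial.X,
    Polynomial.C c2 + Polynomial.C d2 * Polynomial.X, fun x hx hx' =>
      ⟨by simpa using h x hx hx', by simp⟩⟩

lemma ratpos_of_RQ {db : ℝ} {F : ℝ → ℝ} (hdb : 0 < db) (h : RQ db F) (h0 : 0 < F 0) :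
    RatPosCst db F := by
  obtain ⟨P, Q, h⟩ := h
  obtain ⟨hQ0, hE0⟩ := h 0 le_rfl hdb.le
  refine ⟨P, Q, ?_, fun x hx hx' => ⟨(h x hx.le hx').1.ne', (h x hx.le hx').2⟩⟩
  rw [Polynomial.coeff_zero_eq_eval_zero]
  have hP : P.eval 0 = F 0 * Q.eval 0 := by
    field_simp [hQ0.ne'] at hE0
    linarith [hE0]
  rw [hP]
  exact mul_pos h0 hQ0

lemma affine_nonneg_of_pos (db c d : ℝ) (hdb : 0 < db)
    (h : ∀ x : ℝ, 0 < x → x ≤ db → 0 < c + d * x) : 0 ≤ c := by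
  by_contra hc
  push_neg at hc
  set x := min db ((-c) / (|d| + 1)) with hxdef
  have hx0 : 0 < x := lt_min hdb (div_pos (by linarith) (by positivity))
  have hxle : x ≤ db := min_le_left _ _
  have h2 := h x hx0 hxle
  have h3 : x * (|d| + 1) ≤ -c := by
    have := min_le_right db ((-c) / (|d| + 1))
    rw [le_div_iff₀ (by positivity)] at this
    exact this
  have h4 : d * x ≤ |d| * x := mul_le_mul_of_nonneg_right (le_abs_self d) hx0.le
  nlinarith

end rq

section graphs

variable {V : Type} [Fintype V] [DecidableEq V]

lemma aSum_affine (a b : V → ℝ) (x : ℝ) (S : Finset V) :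
    aSum (fun i => a i + b i * x) S = aSum a S + aSum b S * x := by
  simp [aSum, Finset.sum_add_distrib, Finset.sum_mul]

lemma aSum_pos {α : V → ℝ} (hα : ∀ i, 0 < α i) {S : Finset V} (hS : S.Nonempty) :
    0 < aSum α S :=
  Finset.sum_pos (fun i _ => hα i) hS

lemma aSum_mono {α : V → ℝ} (hα : ∀ i, 0 ≤ α i) {S T : Finset V} (hST : S ⊆ T) :
    aSum α S ≤ aSum α T :=
  Finset.sum_le_sum_of_subset_of_nonneg hST (fun i _ _ => hα i)

lemma indep_subset {G : SimpleGraph V} {I S : Finset V} (hI : I ∈ indepSets G)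
    (hS : S ⊆ I) (hSne : S.Nonempty) : S ∈ indepSets G := by
  simp only [indepSets, Finset.mem_filter, Finset.mem_univ, true_and] at hI ⊢
  unfold IsIndep at hI ⊢
  exact ⟨hSne, fun i hi j hj => hI.2 i (hS hi) j (hS hj)⟩

lemma adj_le_addEdge (G : SimpleGraph V) (u v : V) : G ≤ addEdge G u v := le_sup_left

lemma nbr_subset_addEdge (G : SimpleGraph V) (u v : V) (S : Finset V) :
    nbr G S ⊆ nbr (addEdge G u v) S := by
  intro x hx
  simp only [nbr, Finset.mem_filter, Finset.mem_univ, true_and] at hx ⊢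
  obtain ⟨i, hi, hadj⟩ := hx
  exact ⟨i, hi, adj_le_addEdge G u v hadj⟩

lemma indepSets_addEdge_subset (G : SimpleGraph V) (u v : V) :
    indepSets (addEdge G u v) ⊆ indepSets G := by
  intro I hI
  simp only [indepSets, Finset.mem_filter, Finset.mem_univ, true_and] at hI ⊢
  unfold IsIndep at hI ⊢
  exact ⟨hI.1, fun i hi j hj hadj => hI.2 i hi j hj (adj_le_addEdge G u v hadj)⟩

lemma nbr_addEdge_single {G : SimpleGraph V} {u v : V} (hne : u ≠ v) :
    nbr (addEdge G u v) {u} = insert v (nbr G {u}) := by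
  ext x
  simp only [nbr, addEdge, Finset.mem_filter, Finset.mem_univ, true_and,
    Finset.mem_insert, Finset.mem_singleton, SimpleGraph.sup_adj,
    SimpleGraph.fromEdgeSet_adj, Set.mem_singleton_iff]
  constructor
  · rintro ⟨i, hi, h | ⟨h1, h2⟩⟩
    · exact Or.inr ⟨i, hi, h⟩
    · rw [hi] at h1; exact Or.inl (Sym2.congr_right.mp h1)
  · rintro (hx | ⟨i, hi, h⟩)
    · subst hx; exact ⟨u, rfl, Or.inr ⟨rfl, hne⟩⟩
    · exact ⟨i, hi, Or.inl h⟩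

lemma v_not_mem_nbr {G : SimpleGraph V} {u v : V} (hnadj : ¬ G.Adj u v) :
    v ∉ nbr G {u} := by
  simp only [nbr, Finset.mem_filter, Finset.mem_univ, true_and, Finset.mem_singleton]
  rintro ⟨i, rfl, h⟩
  exact hnadj h

/-- Positivity of `Tlist` given positivity of all prefix denominators. -/
lemma Tlist_pos (H : SimpleGraph V) (α : V → ℝ) (hα : ∀ i, 0 < α i) :
    ∀ (l : List V) (P : Finset V),
      (∀ S : Finset V, S.Nonempty → P ⊆ S → S ⊆ P ∪ l.toFinset →
        0 < aSum α (nbr H S) - aSum α S) →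
      0 < Tlist H α l P
  | [], P, _ => by simp [Tlist]
  | i :: l, P, hden => by
      have hsub : insert i P ⊆ P ∪ (i :: l).toFinset := by
        intro x hx
        simp only [List.toFinset_cons, Finset.mem_union, Finset.mem_insert] at hx ⊢
        tauto
      have hd := hden (insert i P) (Finset.insert_nonempty i P)
        (Finset.subset_insert i P) hsub
      have ih := Tlist_pos H α hα l (insert i P) (fun S hS h1 h2 => by
        refine hden S hS (le_trans (Finset.subset_insert i P) h1) ?_
        intro x hx
        have := h2 hx
        simp only [List.toFinset_cons, Finset.mem_union, Finset.mem_insert] at this ⊢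
        tauto)
      have : 0 < α i / (aSum α (nbr H (insert i P)) - aSum α (insert i P)) :=
        div_pos (hα i) hd
      exact mul_pos this ih

/-- `Tlist` decreases when neighborhoods enlarge. -/
lemma Tlist_mono (G Gb : SimpleGraph V) (hsub : ∀ S : Finset V, nbr G S ⊆ nbr Gb S)
    (α : V → ℝ) (hα : ∀ i, 0 < α i) :
    ∀ (l : List V) (P : Finset V),
      (∀ S : Finset V, S.Nonempty → P ⊆ S → S ⊆ P ∪ l.toFinset →
        0 < aSum α (nbr G S) - aSum α S) →
      Tlist Gb α l P ≤ Tlist G α l P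
  | [], P, _ => le_refl _
  | i :: l, P, hden => by
      have hsub' : insert i P ⊆ P ∪ (i :: l).toFinset := by
        intro x hx
        simp only [List.toFinset_cons, Finset.mem_union, Finset.mem_insert] at hx ⊢
        tauto
      have hd : 0 < aSum α (nbr G (insert i P)) - aSum α (insert i P) :=
        hden (insert i P) (Finset.insert_nonempty i P) (Finset.subset_insert i P) hsub'
      have hle : aSum α (nbr G (insert i P)) ≤ aSum α (nbr Gb (insert i P)) :=
        aSum_mono (fun i => (hα i).le) (hsub _)
      have hdb : 0 < aSum α (nbr Gb (insert i P)) - aSum α (insert i P) := by linarith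
      have hdenrec : ∀ S : Finset V, S.Nonempty → insert i P ⊆ S →
          S ⊆ insert i P ∪ l.toFinset → 0 < aSum α (nbr G S) - aSum α S := by
        intro S hS h1 h2
        refine hden S hS (le_trans (Finset.subset_insert i P) h1) ?_
        intro x hx
        have := h2 hx
        simp only [List.toFinset_cons, Finset.mem_union, Finset.mem_insert] at this ⊢
        tauto
      have hdenrecb : ∀ S : Finset V, S.Nonempty → insert i P ⊆ S →
          S ⊆ insert i P ∪ l.toFinset → 0 < aSum α (nbr Gb S) - aSum α S := by
        intro S hS h1 h2
        have := hdenrec S hS h1 h2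
        have hle2 : aSum α (nbr G S) ≤ aSum α (nbr Gb S) :=
          aSum_mono (fun i => (hα i).le) (hsub _)
        linarith
      have ih := Tlist_mono G Gb hsub α hα l (insert i P) hdenrec
      have hposb := Tlist_pos Gb α hα l (insert i P) hdenrecb
      have hposg := Tlist_pos G α hα l (insert i P) hdenrec
      show α i / (aSum α (nbr Gb (insert i P)) - aSum α (insert i P)) * Tlist Gb α l (insert i P)
          ≤ α i / (aSum α (nbr G (insert i P)) - aSum α (insert i P)) * Tlist G α l (insert i P)
      have hfac : α i / (aSum α (nbr Gb (insert i P)) - aSum α (insert i P))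
          ≤ α i / (aSum α (nbr G (insert i P)) - aSum α (insert i P)) := by
        apply div_le_div_of_nonneg_left (hα i).le hd
        linarith
      apply mul_le_mul hfac ih hposb.le
      exact (div_pos (hα i) hd).le

/-- `Tlist` is a rational function of `δ` with denominator positive on `[0, db]`. -/
lemma Tlist_RQ (H : SimpleGraph V) (a b : V → ℝ) (db : ℝ) :
    ∀ (l : List V) (P : Finset V),
      (∀ S : Finset V, S.Nonempty → P ⊆ S → S ⊆ P ∪ l.toFinset →
        ∀ x : ℝ, 0 ≤ x → x ≤ db →
          0 < aSum (fun i => a i + b i * x) (nbr H S) - aSum (fun i => a i + b i * x) S) →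
      RQ db (fun x => Tlist H (fun i => a i + b i * x) l P)
  | [], P, _ => by simpa [Tlist] using RQ_const db 1
  | i :: l, P, hden => by
      have hsub' : insert i P ⊆ P ∪ (i :: l).toFinset := by
        intro x hx
        simp only [List.toFinset_cons, Finset.mem_union, Finset.mem_insert] at hx ⊢
        tauto
      have ih := Tlist_RQ H a b db l (insert i P) (fun S hS h1 h2 => by
        refine hden S hS (le_trans (Finset.subset_insert i P) h1) ?_
        intro x hx
        have := h2 hx
        simp only [List.toFinset_cons, Finset.mem_union, Finset.mem_insert] at this ⊢
        tauto)
      have hd := hden (insert i P) (Finset.insert_nonempty i P) (Finset.subset_insert i P) hsub'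
      have hrat : RQ db (fun x => (a i + b i * x) /
          (aSum (fun j => a j + b j * x) (nbr H (insert i P)) -
            aSum (fun j => a j + b j * x) (insert i P))) := by
        have := RQ_ratio db (a i) (b i)
          (aSum a (nbr H (insert i P)) - aSum a (insert i P))
          (aSum b (nbr H (insert i P)) - aSum b (insert i P))
          (fun x hx hx' => by
            have := hd x hx hx'
            rw [aSum_affine, aSum_affine] at this
            linarith)
        convert this using 2 with x
        rw [aSum_affine, aSum_affine]
        ring_nf
      simpa [Tlist] using RQ_mul hrat ih

lemma perm_toFinset {I : Finset V} {l : List V}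
    (hl : l ∈ I.toList.permutations.toFinset) : l.toFinset = I := by
  rw [List.mem_toFinset, List.mem_permutations] at hl
  rw [List.toFinset_eq_of_perm _ _ hl, Finset.toList_toFinset]

/-- `TI` is a rational function of `δ`. -/
lemma TI_RQ (H : SimpleGraph V) (a b : V → ℝ) (db : ℝ) (I : Finset V)
    (hden : ∀ S : Finset V, S.Nonempty → S ⊆ I →
      ∀ x : ℝ, 0 ≤ x → x ≤ db →
        0 < aSum (fun i => a i + b i * x) (nbr H S) - aSum (fun i => a i + b i * x) S) :
    RQ db (fun x => TI H (fun i => a i + b i * x) I) := by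
  simp only [TI]
  apply RQ_sum
  intro l hl
  apply Tlist_RQ
  intro S hS h1 h2
  refine hden S hS ?_
  rw [← perm_toFinset hl]
  simpa using h2

lemma TI_pos (H : SimpleGraph V) (α : V → ℝ) (hα : ∀ i, 0 < α i) (I : Finset V)
    (hden : ∀ S : Finset V, S.Nonempty → S ⊆ I → 0 < aSum α (nbr H S) - aSum α S) :
    0 < TI H α I := by
  simp only [TI]
  apply Finset.sum_pos
  · intro l hl
    apply Tlist_pos H α hα
    intro S hS h1 h2
    refine hden S hS ?_
    rw [← perm_toFinset hl]
    simpa using h2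
  · exact ⟨I.toList, List.mem_toFinset.2 (List.mem_permutations.2 (List.Perm.refl _))⟩

lemma TI_mono (G Gb : SimpleGraph V) (hsub : ∀ S : Finset V, nbr G S ⊆ nbr Gb S)
    (α : V → ℝ) (hα : ∀ i, 0 < α i) (I : Finset V)
    (hden : ∀ S : Finset V, S.Nonempty → S ⊆ I → 0 < aSum α (nbr G S) - aSum α S) :
    TI Gb α I ≤ TI G α I := by
  simp only [TI]
  apply Finset.sum_le_sum
  intro l hl
  apply Tlist_mono G Gb hsub α hα
  intro S hS h1 h2
  refine hden S hS ?_
  rw [← perm_toFinset hl]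
  simpa using h2

lemma TI_single (H : SimpleGraph V) (α : V → ℝ) (u : V) :
    TI H α {u} = α u / (aSum α (nbr H {u}) - aSum α {u}) := by
  have hfs : (({u} : Finset V).toList.permutations).toFinset = {[u]} := by
    ext l
    simp [List.mem_permutations, Finset.toList_singleton, List.perm_singleton]
  rw [TI, hfs]
  simp [Tlist]

lemma TI_single_lt (G : SimpleGraph V) (u v : V) (hne : u ≠ v) (hnadj : ¬ G.Adj u v)
    (α : V → ℝ) (hα : ∀ i, 0 < α i)
    (hden : 0 < aSum α (nbr G {u}) - aSum α {u}) :
    TI (addEdge G u v) α {u} < TI G α {u} := by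
  rw [TI_single, TI_single, nbr_addEdge_single hne]
  have hv : v ∉ nbr G {u} := v_not_mem_nbr hnadj
  have : aSum α (insert v (nbr G {u})) = α v + aSum α (nbr G {u}) := by
    simp [aSum, Finset.sum_insert hv]
  rw [this]
  apply div_lt_div_of_pos_left (hα u) hden
  linarith [hα v]

end graphs


theorem stmt9
    {V : Type} [Fintype V] [DecidableEq V] (G : SimpleGraph V)
    (istar jstar : V) (hne : istar ≠ jstar) (hnadj : ¬ G.Adj istar jstar)
    (a b : V → ℝ) (δbar : ℝ) (hδbar : 0 < δbar)
    (ha : ∀ i, 0 < a i)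
    (hpos : ∀ δ : ℝ, 0 < δ → δ ≤ δbar → ∀ i, 0 < a i + b i * δ)
    (hdist : ∀ δ : ℝ, 0 < δ → δ ≤ δbar → ∑ i, (a i + b i * δ) = 1)
    (hN : ∀ δ : ℝ, 0 < δ → δ ≤ δbar → Ncond G fun i => a i + b i * δ)
    (Ihat : Finset V) (hIhat : Ihat ∈ indepSets G)
    (hsat : aSum a (nbr G Ihat) = aSum a Ihat)
    (huniq : ∀ J ∈ indepSets G, aSum a (nbr G J) = aSum a J → J = Ihat)
    (hmem : ¬ ∃ J ∈ indepSets G, (istar ∈ J ∨ jstar ∈ J) ∧ Ihat ⊆ J) :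
    RatPosCst δbar (fun δ =>
        (∑ I ∈ (indepSets G).filter (fun I => istar ∈ I ∨ jstar ∈ I),
            TI G (fun i => a i + b i * δ) I) -
          ∑ I ∈ (indepSets (addEdge G istar jstar)).filter (fun I => istar ∈ I ∨ jstar ∈ I),
            TI (addEdge G istar jstar) (fun i => a i + b i * δ) I) := by
  classical
  set Gb := addEdge G istar jstar with hGbdef
  set s := (indepSets G).filter (fun I => istar ∈ I ∨ jstar ∈ I) with hsdef
  set sb := (indepSets Gb).filter (fun I => istar ∈ I ∨ jstar ∈ I) with hsbdef
  have hsb_sub : sb ⊆ s :=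
    Finset.filter_subset_filter _ (indepSets_addEdge_subset G istar jstar)
  -- positivity of the weights on the closed interval
  have hαpos : ∀ x : ℝ, 0 ≤ x → x ≤ δbar → ∀ i, 0 < a i + b i * x := by
    intro x hx hx' i
    rcases eq_or_lt_of_le hx with h | h
    · simpa [← h] using ha i
    · exact hpos x h hx' i
  -- denominator positivity for G on the CLOSED interval, for independent sets ≠ Ihat
  have hdenG0 : ∀ S ∈ indepSets G, S ≠ Ihat → ∀ x : ℝ, 0 ≤ x → x ≤ δbar →
      0 < aSum (fun i => a i + b i * x) (nbr G S) - aSum (fun i => a i + b i * x) S := by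
    intro S hS hSne x hx hx'
    have hposδ : ∀ y : ℝ, 0 < y → y ≤ δbar →
        0 < (aSum a (nbr G S) - aSum a S) + (aSum b (nbr G S) - aSum b S) * y := by
      intro y hy hy'
      have h1 := hN y hy hy' S hS
      rw [aSum_affine, aSum_affine] at h1
      nlinarith [h1]
    have hc0 : 0 ≤ aSum a (nbr G S) - aSum a S :=
      affine_nonneg_of_pos δbar _ _ hδbar hposδ
    have hcne : aSum a (nbr G S) - aSum a S ≠ 0 := by
      intro h
      exact hSne (huniq S hS (by linarith))
    rw [aSum_affine, aSum_affine]
    rcases eq_or_lt_of_le hx with h | h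
    · rw [← h]
      rcases lt_or_eq_of_le hc0 with h2 | h2
      · linarith
      · exact absurd h2.symm hcne
    · have := hposδ x h hx'
      nlinarith [this]
  -- denominator positivity for subsets of sets in s
  have hdenKey : ∀ I ∈ s, ∀ S : Finset V, S.Nonempty → S ⊆ I → ∀ x : ℝ, 0 ≤ x → x ≤ δbar →
      0 < aSum (fun i => a i + b i * x) (nbr G S) - aSum (fun i => a i + b i * x) S := by
    intro I hI S hS hSI
    rw [hsdef, Finset.mem_filter] at hI
    have hSind := indep_subset hI.1 hSI hS
    have hSne : S ≠ Ihat := by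
      rintro rfl
      exact hmem ⟨I, hI.1, hI.2, hSI⟩
    exact hdenG0 S hSind hSne
  -- denominator positivity for Gb
  have hdenKeyb : ∀ I ∈ sb, ∀ S : Finset V, S.Nonempty → S ⊆ I → ∀ x : ℝ, 0 ≤ x → x ≤ δbar →
      0 < aSum (fun i => a i + b i * x) (nbr Gb S) - aSum (fun i => a i + b i * x) S := by
    intro I hI S hS hSI x hx hx'
    have h1 := hdenKey I (hsb_sub hI) S hS hSI x hx hx'
    have h2 : aSum (fun i => a i + b i * x) (nbr G S) ≤
        aSum (fun i => a i + b i * x) (nbr Gb S) :=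
      aSum_mono (fun i => (hαpos x hx hx' i).le) (nbr_subset_addEdge G istar jstar S)
    linarith
  -- the function is a nice rational function
  have hRQ : RQ δbar (fun δ =>
      (∑ I ∈ s, TI G (fun i => a i + b i * δ) I) -
        ∑ I ∈ sb, TI Gb (fun i => a i + b i * δ) I) := by
    apply RQ_sub
    · exact RQ_sum s _ (fun I hI => TI_RQ G a b δbar I (hdenKey I hI))
    · exact RQ_sum sb _ (fun I hI => TI_RQ Gb a b δbar I (hdenKeyb I hI))
  -- membership facts for singletons
  have histars : ({istar} : Finset V) ∈ s := by
    rw [hsdef, Finset.mem_filter]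
    refine ⟨?_, Or.inl (Finset.mem_singleton_self istar)⟩
    simp only [indepSets, Finset.mem_filter, Finset.mem_univ, true_and]
    unfold IsIndep
    exact ⟨Finset.singleton_nonempty istar, by
      intro i hi j hj
      rw [Finset.mem_singleton] at hi hj
      subst hi; subst hj
      exact G.irrefl⟩
  have histarsb : ({istar} : Finset V) ∈ sb := by
    rw [hsbdef, Finset.mem_filter]
    refine ⟨?_, Or.inl (Finset.mem_singleton_self istar)⟩
    simp only [indepSets, Finset.mem_filter, Finset.mem_univ, true_and]
    unfold IsIndep
    exact ⟨Finset.singleton_nonempty istar, by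
      intro i hi j hj
      rw [Finset.mem_singleton] at hi hj
      subst hi; subst hj
      exact Gb.irrefl⟩
  -- positivity at 0
  have hα0 : ∀ i, 0 < a i + b i * 0 := fun i => by simpa using ha i
  have hF0 : 0 < (∑ I ∈ s, TI G (fun i => a i + b i * 0) I) -
      ∑ I ∈ sb, TI Gb (fun i => a i + b i * 0) I := by
    have h1 : ∑ I ∈ sb, TI Gb (fun i => a i + b i * 0) I <
        ∑ I ∈ sb, TI G (fun i => a i + b i * 0) I := by
      apply Finset.sum_lt_sum
      · intro I hI
        exact TI_mono G Gb (nbr_subset_addEdge G istar jstar) _ hα0 I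
          (fun S hS hSI => hdenKey I (hsb_sub hI) S hS hSI 0 le_rfl hδbar.le)
      · refine ⟨{istar}, histarsb, ?_⟩
        exact TI_single_lt G istar jstar hne hnadj _ hα0
          (hdenKey {istar} histars {istar} (Finset.singleton_nonempty istar)
            (Finset.Subset.refl _) 0 le_rfl hδbar.le)
    have h2 : ∑ I ∈ sb, TI G (fun i => a i + b i * 0) I ≤
        ∑ I ∈ s, TI G (fun i => a i + b i * 0) I := by
      apply Finset.sum_le_sum_of_subset_of_nonneg hsb_sub
      intro I hI _
      exact (TI_pos G _ hα0 I
        (fun S hS hSI => hdenKey I hI S hS hSI 0 le_rfl hδbar.le)).le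
    linarith
  exact ratpos_of_RQ hδbar hRQ hF0
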